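/- arXiv:0801.2627 — 3 statements merged into one kernel-verified Lean document; each statement's English description precedes it below -/
import Mathlib

section
/- For every θ ∈ (0,π) and all real p, q, the kernel of T̂_θ admits the absolutely convergent expansion T̂_θ(p,q) = (sin θ/π) · Σ_{n=0}^∞ ((2 cos θ)^n / n!) · ∫_0^∞ s^n e^{−2 s sin²(θ)} (p q)^n e^{−s(p²+q²)} ds. -/
open MeasureTheory Real

noncomputable section

/-- The kernel of the integral operator `T̂_θ` on `L²(ℝ)`:
`T̂_θ(p,q) = (1/(2π sin θ)) · ((p² − 2 cos(θ)·p·q + q²)/(2 sin²(θ)) + 1)⁻¹`. -/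
def Tker (θ p q : ℝ) : ℝ :=
  (1 / (2 * Real.pi * Real.sin θ)) *
    ((p ^ 2 - 2 * Real.cos θ * p * q + q ^ 2) / (2 * Real.sin θ ^ 2) + 1)⁻¹

/-- For every `θ ∈ (0,π)` and all real `p, q`, the kernel of `T̂_θ` admits the absolutely
convergent expansion
`T̂_θ(p,q) = (sin θ/π) · Σ_{n=0}^∞ ((2 cos θ)^n / n!) · ∫_0^∞ s^n e^{−2 s sin²θ} (pq)^n e^{−s(p²+q²)} ds`. -/
theorem Tker_expansion (θ : ℝ) (hθ : θ ∈ Set.Ioo 0 Real.pi) (p q : ℝ) :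
    (Summable fun n : ℕ =>
      |Real.sin θ / Real.pi * ((2 * Real.cos θ) ^ n / (n.factorial : ℝ)) *
        ∫ s in Set.Ioi (0 : ℝ),
          s ^ n * Real.exp (-2 * s * Real.sin θ ^ 2) * (p * q) ^ n *
            Real.exp (-s * (p ^ 2 + q ^ 2))|) ∧
    HasSum (fun n : ℕ =>
      Real.sin θ / Real.pi * ((2 * Real.cos θ) ^ n / (n.factorial : ℝ)) *
        ∫ s in Set.Ioi (0 : ℝ),
          s ^ n * Real.exp (-2 * s * Real.sin θ ^ 2) * (p * q) ^ n *
            Real.exp (-s * (p ^ 2 + q ^ 2)))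
      (Tker θ p q) := by
  have hsin : 0 < Real.sin θ := Real.sin_pos_of_pos_of_lt_pi hθ.1 hθ.2
  set a : ℝ := 2 * Real.sin θ ^ 2 + (p ^ 2 + q ^ 2) with ha_def
  have ha : 0 < a := by positivity
  -- the integral evaluates to (p*q)^n * n! / a^(n+1)
  have hint : ∀ n : ℕ,
      (∫ s in Set.Ioi (0 : ℝ),
        s ^ n * Real.exp (-2 * s * Real.sin θ ^ 2) * (p * q) ^ n *
          Real.exp (-s * (p ^ 2 + q ^ 2)))
      = (p * q) ^ n * ((n.factorial : ℝ) / a ^ (n + 1)) := by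
    intro n
    have key : ∀ s : ℝ,
        s ^ n * Real.exp (-2 * s * Real.sin θ ^ 2) * (p * q) ^ n *
          Real.exp (-s * (p ^ 2 + q ^ 2))
        = (p * q) ^ n * (s ^ n * Real.exp (-(a * s))) := by
      intro s
      have he : Real.exp (-2 * s * Real.sin θ ^ 2) * Real.exp (-s * (p ^ 2 + q ^ 2))
          = Real.exp (-(a * s)) := by
        rw [← Real.exp_add]; congr 1; rw [ha_def]; ring
      calc s ^ n * Real.exp (-2 * s * Real.sin θ ^ 2) * (p * q) ^ n *
            Real.exp (-s * (p ^ 2 + q ^ 2))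
          = (p * q) ^ n * (s ^ n *
            (Real.exp (-2 * s * Real.sin θ ^ 2) * Real.exp (-s * (p ^ 2 + q ^ 2)))) := by ring
        _ = (p * q) ^ n * (s ^ n * Real.exp (-(a * s))) := by rw [he]
    simp_rw [key]
    rw [MeasureTheory.integral_const_mul]
    congr 1
    -- ∫ s in Ioi 0, s^n * exp(-(a*s)) = n! / a^(n+1)
    have h1 : ((n : ℝ) + 1) - 1 = (n : ℝ) := by ring
    have h2 := Real.integral_rpow_mul_exp_neg_mul_Ioi
      (a := (n : ℝ) + 1) (r := a) (by positivity) ha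
    rw [h1] at h2
    have h3 : ∀ t ∈ Set.Ioi (0 : ℝ),
        t ^ ((n : ℝ)) * Real.exp (-(a * t)) = t ^ n * Real.exp (-(a * t)) := by
      intro t _; rw [Real.rpow_natCast]
    rw [setIntegral_congr_fun measurableSet_Ioi h3] at h2
    rw [h2, Real.Gamma_nat_eq_factorial,
      show ((n : ℝ) + 1) = ((n + 1 : ℕ) : ℝ) by push_cast; ring,
      Real.rpow_natCast, div_pow, one_pow]
    field_simp
  set r : ℝ := 2 * p * q * Real.cos θ / a with hr_def
  set c : ℝ := Real.sin θ / (Real.pi * a) with hc_def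
  -- bound giving |r| < 1 and positivity of the final denominator
  have hb : |2 * p * q * Real.cos θ| < a := by
    rw [ha_def, abs_mul, abs_mul, abs_mul, abs_two]
    nlinarith [Real.abs_cos_le_one θ, abs_nonneg p, abs_nonneg q, abs_nonneg (Real.cos θ),
      two_mul_le_add_sq |p| |q|, sq_abs p, sq_abs q, mul_pos hsin hsin,
      mul_nonneg (abs_nonneg p) (abs_nonneg q)]
  have hrabs : |r| < 1 := by
    rw [hr_def, abs_div, abs_of_pos ha, div_lt_one ha]
    exact hb
  have hd : 0 < a - 2 * p * q * Real.cos θ := by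
    have := neg_abs_le (2 * p * q * Real.cos θ)
    linarith [hb, le_abs_self (2 * p * q * Real.cos θ)]
  -- each term equals c * r^n
  have hterm : ∀ n : ℕ,
      Real.sin θ / Real.pi * ((2 * Real.cos θ) ^ n / (n.factorial : ℝ)) *
        (∫ s in Set.Ioi (0 : ℝ),
          s ^ n * Real.exp (-2 * s * Real.sin θ ^ 2) * (p * q) ^ n *
            Real.exp (-s * (p ^ 2 + q ^ 2)))
      = c * r ^ n := by
    intro n
    rw [hint n, hc_def, hr_def, div_pow]
    have hfac : ((n.factorial : ℝ)) ≠ 0 := Nat.cast_ne_zero.mpr n.factorial_ne_zero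
    have hπ : (Real.pi : ℝ) ≠ 0 := Real.pi_ne_zero
    field_simp
    ring
  have hsum : HasSum (fun n : ℕ => c * r ^ n) (c * (1 - r)⁻¹) :=
    (hasSum_geometric_of_abs_lt_one hrabs).mul_left c
  have hval : c * (1 - r)⁻¹ = Tker θ p q := by
    rw [hc_def, hr_def, Tker]
    have hπ : (Real.pi : ℝ) ≠ 0 := Real.pi_ne_zero
    have h1 : (1 : ℝ) - 2 * p * q * Real.cos θ / a = (a - 2 * p * q * Real.cos θ) / a := by
      field_simp
    rw [h1]
    have h2 : (p ^ 2 - 2 * Real.cos θ * p * q + q ^ 2) / (2 * Real.sin θ ^ 2) + 1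
        = (a - 2 * p * q * Real.cos θ) / (2 * Real.sin θ ^ 2) := by
      rw [ha_def]; field_simp; ring
    rw [h2]
    rw [inv_div, inv_div]
    field_simp
  constructor
  · have : Summable (fun n : ℕ => c * r ^ n) := hsum.summable
    have heq : (fun n : ℕ =>
        |Real.sin θ / Real.pi * ((2 * Real.cos θ) ^ n / (n.factorial : ℝ)) *
          ∫ s in Set.Ioi (0 : ℝ),
            s ^ n * Real.exp (-2 * s * Real.sin θ ^ 2) * (p * q) ^ n *
              Real.exp (-s * (p ^ 2 + q ^ 2))|)
        = fun n : ℕ => |c * r ^ n| := by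
      funext n; rw [hterm n]
    rw [heq]
    exact this.abs
  · have heq : (fun n : ℕ =>
        Real.sin θ / Real.pi * ((2 * Real.cos θ) ^ n / (n.factorial : ℝ)) *
          ∫ s in Set.Ioi (0 : ℝ),
            s ^ n * Real.exp (-2 * s * Real.sin θ ^ 2) * (p * q) ^ n *
              Real.exp (-s * (p ^ 2 + q ^ 2)))
        = fun n : ℕ => c * r ^ n := by
      funext n; exact hterm n
    rw [heq, ← hval]
    exact hsum
end
end

section
/- The function φ(p) = √(2/π) · (p²+1)⁻¹ belongs to L²(ℝ) and satisfies, for almost every p ∈ ℝ, (p²+2)^{−1/2} φ(p) + ∫_ℝ (1/π)(p²+q²+2)⁻¹ φ(q) dq = φ(p); that is, φ is an eigenfunction of T̂_0 + T̂_{π/2} with eigenvalue 1. -/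
open MeasureTheory Real

noncomputable section

lemma aux_integrable {c : ℝ} (hc : c ≠ 0) :
    Integrable fun q : ℝ => (q ^ 2 + c ^ 2)⁻¹ := by
  have h : ∀ q : ℝ, (q ^ 2 + c ^ 2)⁻¹ = c⁻¹ ^ 2 * (1 + (q / c) ^ 2)⁻¹ := by
    intro q
    have hq : 0 < q ^ 2 + c ^ 2 := by positivity
    field_simp
    ring
  simp_rw [h]
  exact (integrable_inv_one_add_sq.comp_div hc).const_mul _

lemma aux_integral {c : ℝ} (hc : 0 < c) :
    ∫ q : ℝ, (q ^ 2 + c ^ 2)⁻¹ = π / c := by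
  have h : ∀ q : ℝ, (q ^ 2 + c ^ 2)⁻¹ = c⁻¹ ^ 2 * (1 + (q / c) ^ 2)⁻¹ := by
    intro q
    have hq : 0 < q ^ 2 + c ^ 2 := by positivity
    field_simp
    ring
  simp_rw [h]
  rw [MeasureTheory.integral_const_mul,
    MeasureTheory.Measure.integral_comp_div (fun x : ℝ => (1 + x ^ 2)⁻¹) c,
    integral_univ_inv_one_add_sq, abs_of_pos hc, smul_eq_mul]
  field_simp

/-- The eigenvalue equation `(T̂₀ + T̂_{π/2})φ = φ` for `φ(p) = √(2/π)·(p²+1)⁻¹`, where `T̂₀`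
is multiplication by `(p²+2)^{−1/2}` and `T̂_{π/2}` is the integral operator on `L²(ℝ)` with
kernel `(1/π)(p²+q²+2)⁻¹`; in particular `φ ∈ L²(ℝ)`. -/
theorem exact_eigenfunction_T0_plus_TpiOver2 :
    MemLp (fun p : ℝ => Real.sqrt (2 / Real.pi) * ((p ^ 2 + 1)⁻¹)) 2
      (volume : Measure ℝ) ∧
    ∀ᵐ p : ℝ,
      (Real.sqrt (p ^ 2 + 2))⁻¹ * (Real.sqrt (2 / Real.pi) * ((p ^ 2 + 1)⁻¹)) +
        ∫ q : ℝ, (1 / Real.pi) * (p ^ 2 + q ^ 2 + 2)⁻¹ *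
          (Real.sqrt (2 / Real.pi) * ((q ^ 2 + 1)⁻¹)) =
      Real.sqrt (2 / Real.pi) * ((p ^ 2 + 1)⁻¹) := by
  set c0 : ℝ := Real.sqrt (2 / Real.pi) with hc0
  constructor
  · have hcont : Continuous fun p : ℝ => c0 * ((p ^ 2 + 1)⁻¹) := by
      apply continuous_const.mul
      apply Continuous.inv₀ (by continuity)
      intro x; positivity
    rw [memLp_two_iff_integrable_sq_norm hcont.aestronglyMeasurable]
    have hint : Integrable fun p : ℝ => c0 ^ 2 * ((p ^ 2 + 1)⁻¹ ^ 2) := by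
      apply Integrable.const_mul
      have hcont2 : Continuous fun x : ℝ => (x ^ 2 + 1)⁻¹ :=
        Continuous.inv₀ (by continuity) (fun x => by positivity)
      apply (aux_integrable (c := 1) one_ne_zero).mono
        ((hcont2.pow 2).aestronglyMeasurable)
      filter_upwards with q
      have h1 : (0:ℝ) < q ^ 2 + 1 := by positivity
      have h2 : (1:ℝ) ≤ q ^ 2 + 1 := by nlinarith
      rw [Real.norm_eq_abs, Real.norm_eq_abs, Pi.pow_apply, abs_of_pos (show (0:ℝ) < ((q ^ 2 + 1)⁻¹) ^ 2 by positivity),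
        abs_of_pos (show (0:ℝ) < (q ^ 2 + 1 ^ 2)⁻¹ by positivity)]
      rw [one_pow]
      calc ((q ^ 2 + 1)⁻¹) ^ 2 ≤ (q ^ 2 + 1)⁻¹ * 1 := by
            rw [pow_two]
            gcongr
            exact inv_le_one_of_one_le₀ h2
        _ = (q ^ 2 + 1)⁻¹ := mul_one _
    apply hint.congr
    filter_upwards with p
    rw [Real.norm_eq_abs, ← abs_pow, mul_pow, abs_of_nonneg (by positivity)]
  · filter_upwards with p
    set a : ℝ := Real.sqrt (p ^ 2 + 2) with ha
    have ha2 : a ^ 2 = p ^ 2 + 2 := Real.sq_sqrt (by positivity)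
    have ha1 : 1 < a := by nlinarith [Real.sqrt_nonneg (p ^ 2 + 2)]
    have ha0 : 0 < a := by linarith
    have key : (∫ q : ℝ, (1 / Real.pi) * (p ^ 2 + q ^ 2 + 2)⁻¹ * (c0 * ((q ^ 2 + 1)⁻¹)))
        = (c0 / Real.pi) * ((p ^ 2 + 1)⁻¹ * (Real.pi - Real.pi / a)) := by
      have heq : ∀ q : ℝ, (1 / Real.pi) * (p ^ 2 + q ^ 2 + 2)⁻¹ * (c0 * ((q ^ 2 + 1)⁻¹))
          = (c0 / Real.pi) * ((p ^ 2 + 1)⁻¹ * ((q ^ 2 + 1 ^ 2)⁻¹ - (q ^ 2 + a ^ 2)⁻¹)) := by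
        intro q
        have h1 : (0:ℝ) < q ^ 2 + 1 := by positivity
        have h2 : (0:ℝ) < p ^ 2 + q ^ 2 + 2 := by positivity
        have h3 : (0:ℝ) < p ^ 2 + 1 := by positivity
        have h4 : (0:ℝ) < q ^ 2 + a ^ 2 := by positivity
        rw [ha2]
        have hpi : Real.pi ≠ 0 := Real.pi_ne_zero
        field_simp
        ring
      simp_rw [heq]
      rw [MeasureTheory.integral_const_mul, MeasureTheory.integral_const_mul,
        MeasureTheory.integral_sub (aux_integrable one_ne_zero) (aux_integrable ha0.ne'),
        aux_integral one_pos, aux_integral ha0, div_one]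
    rw [key]
    have h3 : (0:ℝ) < p ^ 2 + 1 := by positivity
    have hpi : Real.pi ≠ 0 := Real.pi_ne_zero
    field_simp
    ring
end
end

section
/- The function φ(p) = 6^{3/4} / (√π (2p²+3)) belongs to L²(ℝ) and satisfies, for almost every p ∈ ℝ, (p²+2)^{−1/2} φ(p) + 2 ∫_ℝ T̂_{2π/3}(p,q) φ(q) dq = √2 · φ(p); that is, φ is an eigenfunction of T̂_0 + 2 T̂_{2π/3} with eigenvalue √2. -/
open MeasureTheory Real Filter Topology

noncomputable section

set_option maxHeartbeats 1000000 in
lemma ratio_tendsto_atTop (p : ℝ) :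
    Tendsto (fun q : ℝ => (2*q^2+2*p*q+2*p^2+3)/(2*q^2+3)) atTop (𝓝 1) := by
  have hnum : Tendsto (fun q : ℝ => 2*p + 2*p^2 * q⁻¹) atTop (𝓝 (2*p)) := by
    have h := (tendsto_inv_atTop_zero (𝕜 := ℝ)).const_mul (2*p^2)
    simpa using tendsto_const_nhds.add h
  have hid : Tendsto (fun q : ℝ => q) atTop atTop := tendsto_id
  have h2q : Tendsto (fun q : ℝ => 2*q) atTop atTop :=
    hid.const_mul_atTop (show (0:ℝ) < 2 by norm_num)
  have hden : Tendsto (fun q : ℝ => 2*q + 3 * q⁻¹) atTop atTop := by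
    apply h2q.atTop_add_zero_eventuallyLE
    filter_upwards [eventually_gt_atTop (0:ℝ)] with q hq
    positivity
  have h0 : Tendsto (fun q : ℝ => (2*p + 2*p^2*q⁻¹)/(2*q + 3*q⁻¹)) atTop (𝓝 0) :=
    hnum.div_atTop hden
  have h0' : Tendsto (fun q : ℝ => (2*p*q + 2*p^2)/(2*q^2+3)) atTop (𝓝 0) := by
    apply h0.congr'
    filter_upwards [eventually_gt_atTop (0:ℝ)] with q hq
    have hq0 : q ≠ 0 := ne_of_gt hq
    have hB : (2*q^2+3) ≠ 0 := by positivity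
    have hd : (2*q + 3*q⁻¹) ≠ 0 := by positivity
    rw [div_eq_div_iff hd hB]
    field_simp
    try exact Or.inl trivial
  have h1 : Tendsto (fun q : ℝ => 1 + (2*p*q + 2*p^2)/(2*q^2+3)) atTop (𝓝 (1+0)) :=
    tendsto_const_nhds.add h0'
  simp only [add_zero] at h1
  apply h1.congr
  intro q
  have hB : (2*q^2+3) ≠ 0 := by positivity
  field_simp
  ring

lemma ratio_tendsto_atBot (p : ℝ) :
    Tendsto (fun q : ℝ => (2*q^2+2*p*q+2*p^2+3)/(2*q^2+3)) atBot (𝓝 1) := by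
  have h := (ratio_tendsto_atTop (-p)).comp tendsto_neg_atBot_atTop
  apply h.congr
  intro q
  simp only [Function.comp_apply]
  ring_nf

set_option maxHeartbeats 1000000 in
lemma key_integral (p : ℝ) (hp : p ≠ 0) :
    ∫ q : ℝ, ((2*q^2+2*p*q+2*p^2+3) * (2*q^2+3))⁻¹ =
      Real.pi / (2*(2*p^2+3)) * ((Real.sqrt (3/2))⁻¹ - (Real.sqrt (3*p^2+6))⁻¹) := by
  set a := Real.sqrt (3*p^2+6) with ha_def
  set s := Real.sqrt (3/2) with hs_def
  have ha : 0 < a := Real.sqrt_pos.mpr (by positivity)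
  have hs : 0 < s := Real.sqrt_pos.mpr (by norm_num)
  have ha2 : a^2 = 3*p^2+6 := Real.sq_sqrt (by positivity)
  have hs2 : s^2 = 3/2 := Real.sq_sqrt (by norm_num)
  have hP : (0:ℝ) < 2*p^2+3 := by positivity
  have hApos : ∀ q : ℝ, (0:ℝ) < 2*q^2+2*p*q+2*p^2+3 := by
    intro q; nlinarith [sq_nonneg (q+p), sq_nonneg q, sq_nonneg p]
  have hBpos : ∀ q : ℝ, (0:ℝ) < 2*q^2+3 := fun q => by positivity
  have hderiv : ∀ q : ℝ, HasDerivAt (fun x : ℝ =>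
      (4*p*(2*p^2+3))⁻¹ * (Real.log (2*x^2+2*p*x+2*p^2+3) - Real.log (2*x^2+3)) +
        -(2*a*(2*p^2+3))⁻¹ * Real.arctan ((2*x+p)/a) +
        (2*s*(2*p^2+3))⁻¹ * Real.arctan (x/s))
      (((2*q^2+2*p*q+2*p^2+3) * (2*q^2+3))⁻¹) q := by
    intro q
    have hA : HasDerivAt (fun x : ℝ => 2*x^2+2*p*x+2*p^2+3) (4*q+2*p) q := by
      have h1 := ((((hasDerivAt_pow 2 q).const_mul (2:ℝ)).add
        ((hasDerivAt_id' q).const_mul (2*p))).add_const ((2:ℝ)*p^2)).add_const (3:ℝ)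
      refine h1.congr_deriv ?_
      push_cast; ring
    have hB : HasDerivAt (fun x : ℝ => 2*x^2+3) (4*q) q := by
      have h1 := ((hasDerivAt_pow 2 q).const_mul (2:ℝ)).add_const (3:ℝ)
      refine h1.congr_deriv ?_
      push_cast; ring
    have hlogA := hA.log (hApos q).ne'
    have hlogB := hB.log (hBpos q).ne'
    have hin1 : HasDerivAt (fun x : ℝ => (2*x+p)/a) (2/a) q := by
      have h1 : HasDerivAt (fun x : ℝ => 2*x+p) 2 q := by
        simpa using ((hasDerivAt_id' q).const_mul (2:ℝ)).add_const p
      simpa using h1.div_const a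
    have hin2 : HasDerivAt (fun x : ℝ => x/s) (1/s) q := by
      simpa using (hasDerivAt_id' q).div_const s
    have htot := (((hlogA.sub hlogB).const_mul ((4*p*(2*p^2+3))⁻¹)).add
      (hin1.arctan.const_mul (-(2*a*(2*p^2+3))⁻¹))).add
      (hin2.arctan.const_mul ((2*s*(2*p^2+3))⁻¹))
    refine htot.congr_deriv ?_
    have e1 : 1 + ((2*q+p)/a)^2 = 2*(2*q^2+2*p*q+2*p^2+3)/a^2 := by
      have hD : (3*p^2+6:ℝ) ≠ 0 := by positivity
      rw [div_pow, ha2]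
      field_simp
      ring
    have e2 : 1 + (q/s)^2 = (2*q^2+3)/(2*s^2) := by
      rw [div_pow, hs2]
      ring
    have s1 : 1/(1 + ((2*q+p)/a)^2) * (2/a) = a/(2*q^2+2*p*q+2*p^2+3) := by
      rw [e1, one_div, inv_div]
      field_simp [ha.ne', (hApos q).ne']
    have s2 : 1/(1 + (q/s)^2) * (1/s) = 2*s/(2*q^2+3) := by
      rw [e2, one_div, inv_div]
      field_simp [hs.ne', (hBpos q).ne']
    rw [s1, s2]
    have hAq := (hApos q).ne'
    have hBq := (hBpos q).ne'
    have hAq' : 2*(q*(q+p)+p^2)+3 ≠ 0 := by convert hAq using 1; ring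
    field_simp
    ring
  have hint : Integrable (fun q : ℝ => ((2*q^2+2*p*q+2*p^2+3) * (2*q^2+3))⁻¹) := by
    have hcont : Continuous (fun q : ℝ => ((2*q^2+2*p*q+2*p^2+3) * (2*q^2+3))⁻¹) := by
      apply Continuous.inv₀
      · continuity
      · intro q; exact (mul_pos (hApos q) (hBpos q)).ne'
    apply (integrable_inv_one_add_sq.const_mul (1/3)).mono hcont.aestronglyMeasurable
    apply ae_of_all
    intro q
    have h1 : (0:ℝ) < 1 + q^2 := by positivity
    have h3 : (0:ℝ) < (2*q^2+2*p*q+2*p^2+3) * (2*q^2+3) := mul_pos (hApos q) (hBpos q)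
    rw [Real.norm_eq_abs, Real.norm_eq_abs, abs_of_pos (by positivity),
      abs_of_pos (by positivity)]
    rw [show (1/3 : ℝ) * (1+q^2)⁻¹ = (3*(1+q^2))⁻¹ by rw [mul_inv]; ring]
    apply inv_anti₀ (by positivity)
    nlinarith [sq_nonneg (q+p), sq_nonneg q, sq_nonneg p, sq_nonneg (q*p), sq_nonneg (q^2)]
  have harctop : Tendsto Real.arctan atTop (𝓝 (Real.pi/2)) :=
    tendsto_nhds_of_tendsto_nhdsWithin Real.tendsto_arctan_atTop
  have harcbot : Tendsto Real.arctan atBot (𝓝 (-(Real.pi/2))) :=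
    tendsto_nhds_of_tendsto_nhdsWithin Real.tendsto_arctan_atBot
  have hlog_top : Tendsto (fun q : ℝ =>
      Real.log (2*q^2+2*p*q+2*p^2+3) - Real.log (2*q^2+3)) atTop (𝓝 0) := by
    have h := (Real.continuousAt_log one_ne_zero).tendsto.comp (ratio_tendsto_atTop p)
    rw [Real.log_one] at h
    apply h.congr
    intro q
    simp only [Function.comp_apply]
    rw [Real.log_div (hApos q).ne' (hBpos q).ne']
  have hlog_bot : Tendsto (fun q : ℝ =>
      Real.log (2*q^2+2*p*q+2*p^2+3) - Real.log (2*q^2+3)) atBot (𝓝 0) := by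
    have h := (Real.continuousAt_log one_ne_zero).tendsto.comp (ratio_tendsto_atBot p)
    rw [Real.log_one] at h
    apply h.congr
    intro q
    simp only [Function.comp_apply]
    rw [Real.log_div (hApos q).ne' (hBpos q).ne']
  have hidT : Tendsto (fun q : ℝ => q) atTop atTop := tendsto_id
  have hidB : Tendsto (fun q : ℝ => q) atBot atBot := tendsto_id
  have hin1_top : Tendsto (fun q : ℝ => (2*q+p)/a) atTop atTop :=
    Tendsto.atTop_div_const ha
      (tendsto_atTop_add_const_right _ p (hidT.const_mul_atTop (show (0:ℝ) < 2 by norm_num)))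
  have hin1_bot : Tendsto (fun q : ℝ => (2*q+p)/a) atBot atBot :=
    Tendsto.atBot_div_const ha
      (tendsto_atBot_add_const_right _ p (hidB.const_mul_atBot (show (0:ℝ) < 2 by norm_num)))
  have hin2_top : Tendsto (fun q : ℝ => q/s) atTop atTop :=
    Tendsto.atTop_div_const hs hidT
  have hin2_bot : Tendsto (fun q : ℝ => q/s) atBot atBot :=
    Tendsto.atBot_div_const hs hidB
  have hFtop : Tendsto (fun q : ℝ =>
      (4*p*(2*p^2+3))⁻¹ * (Real.log (2*q^2+2*p*q+2*p^2+3) - Real.log (2*q^2+3)) +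
        -(2*a*(2*p^2+3))⁻¹ * Real.arctan ((2*q+p)/a) +
        (2*s*(2*p^2+3))⁻¹ * Real.arctan (q/s)) atTop
      (𝓝 ((4*p*(2*p^2+3))⁻¹ * 0 + -(2*a*(2*p^2+3))⁻¹ * (Real.pi/2) +
        (2*s*(2*p^2+3))⁻¹ * (Real.pi/2))) := by
    exact ((hlog_top.const_mul _).add ((harctop.comp hin1_top).const_mul _)).add
      ((harctop.comp hin2_top).const_mul _)
  have hFbot : Tendsto (fun q : ℝ =>
      (4*p*(2*p^2+3))⁻¹ * (Real.log (2*q^2+2*p*q+2*p^2+3) - Real.log (2*q^2+3)) +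
        -(2*a*(2*p^2+3))⁻¹ * Real.arctan ((2*q+p)/a) +
        (2*s*(2*p^2+3))⁻¹ * Real.arctan (q/s)) atBot
      (𝓝 ((4*p*(2*p^2+3))⁻¹ * 0 + -(2*a*(2*p^2+3))⁻¹ * (-(Real.pi/2)) +
        (2*s*(2*p^2+3))⁻¹ * (-(Real.pi/2)))) := by
    exact ((hlog_bot.const_mul _).add ((harcbot.comp hin1_bot).const_mul _)).add
      ((harcbot.comp hin2_bot).const_mul _)
  rw [integral_of_hasDerivAt_of_tendsto hderiv hint hFbot hFtop]
  field_simp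
  ring

theorem aux_eigen_eq (p : ℝ) (hp : p ≠ 0) :
      (Real.sqrt (p ^ 2 + 2))⁻¹ *
          ((6 : ℝ) ^ ((3 : ℝ) / 4) / (Real.sqrt Real.pi * (2 * p ^ 2 + 3))) +
        2 * ∫ q : ℝ, Tker (2 * Real.pi / 3) p q *
          ((6 : ℝ) ^ ((3 : ℝ) / 4) / (Real.sqrt Real.pi * (2 * q ^ 2 + 3))) =
      Real.sqrt 2 * ((6 : ℝ) ^ ((3 : ℝ) / 4) / (Real.sqrt Real.pi * (2 * p ^ 2 + 3))) := by
  have hsin : Real.sin (2 * Real.pi / 3) = Real.sqrt 3 / 2 := by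
    rw [show (2 * Real.pi / 3) = Real.pi - Real.pi/3 by ring, Real.sin_pi_sub,
      Real.sin_pi_div_three]
  have hcos : Real.cos (2 * Real.pi / 3) = -(1/2) := by
    rw [show (2 * Real.pi / 3) = Real.pi - Real.pi/3 by ring, Real.cos_pi_sub,
      Real.cos_pi_div_three]
  have h3 : Real.sqrt 3 ^ 2 = 3 := Real.sq_sqrt (by norm_num)
  have h3pos : (0:ℝ) < Real.sqrt 3 := Real.sqrt_pos.mpr (by norm_num)
  have hpipos := Real.pi_pos
  have hspi : (0:ℝ) < Real.sqrt Real.pi := Real.sqrt_pos.mpr hpipos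
  have hker : ∀ q : ℝ, Tker (2 * Real.pi / 3) p q *
      ((6 : ℝ) ^ ((3 : ℝ) / 4) / (Real.sqrt Real.pi * (2 * q ^ 2 + 3))) =
      (Real.sqrt 3 * (6 : ℝ) ^ ((3 : ℝ) / 4) / (Real.pi * Real.sqrt Real.pi)) *
        ((2*q^2+2*p*q+2*p^2+3) * (2*q^2+3))⁻¹ := by
    intro q
    have hApos : (0:ℝ) < 2*q^2+2*p*q+2*p^2+3 := by
      nlinarith [sq_nonneg (q+p), sq_nonneg q, sq_nonneg p]
    have hBpos : (0:ℝ) < 2*q^2+3 := by positivity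
    rw [Tker, hsin, hcos]
    have e1 : (p ^ 2 - 2 * (-(1/2)) * p * q + q ^ 2) / (2 * (Real.sqrt 3 / 2) ^ 2) + 1
        = (2*q^2+2*p*q+2*p^2+3) / 3 := by
      rw [div_pow, h3]
      ring
    rw [e1]
    field_simp
    rw [h3]
  rw [show (∫ q : ℝ, Tker (2 * Real.pi / 3) p q *
      ((6 : ℝ) ^ ((3 : ℝ) / 4) / (Real.sqrt Real.pi * (2 * q ^ 2 + 3)))) =
      ∫ q : ℝ, (Real.sqrt 3 * (6 : ℝ) ^ ((3 : ℝ) / 4) / (Real.pi * Real.sqrt Real.pi)) *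
        ((2*q^2+2*p*q+2*p^2+3) * (2*q^2+3))⁻¹ from by
    congr 1; funext q; exact hker q]
  rw [MeasureTheory.integral_const_mul, key_integral p hp]
  have hsq32 : Real.sqrt (3/2) = Real.sqrt 3 / Real.sqrt 2 :=
    Real.sqrt_div (by norm_num) 2
  have hsplit : Real.sqrt (3*p^2+6) = Real.sqrt 3 * Real.sqrt (p^2+2) := by
    rw [show (3*p^2+6 : ℝ) = 3*(p^2+2) by ring, Real.sqrt_mul (by norm_num)]
  rw [hsq32, hsplit]
  have h2pos : (0:ℝ) < Real.sqrt 2 := Real.sqrt_pos.mpr (by norm_num)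
  have hu : (0:ℝ) < Real.sqrt (p^2+2) := Real.sqrt_pos.mpr (by positivity)
  have hP : (0:ℝ) < 2*p^2+3 := by positivity
  field_simp
  ring

/-- The eigenvalue equation `(T̂₀ + 2T̂_{2π/3})φ = √2·φ` for `φ(p) = 6^{3/4}/(√π (2p²+3))`,
where `T̂₀` is multiplication by `(p²+2)^{−1/2}`; in particular `φ ∈ L²(ℝ)`. -/
theorem exact_eigenfunction_T0_plus_two_T2piOver3 :
    MemLp (fun p : ℝ => (6 : ℝ) ^ ((3 : ℝ) / 4) / (Real.sqrt Real.pi * (2 * p ^ 2 + 3))) 2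
      (volume : Measure ℝ) ∧
    ∀ᵐ p : ℝ,
      (Real.sqrt (p ^ 2 + 2))⁻¹ *
          ((6 : ℝ) ^ ((3 : ℝ) / 4) / (Real.sqrt Real.pi * (2 * p ^ 2 + 3))) +
        2 * ∫ q : ℝ, Tker (2 * Real.pi / 3) p q *
          ((6 : ℝ) ^ ((3 : ℝ) / 4) / (Real.sqrt Real.pi * (2 * q ^ 2 + 3))) =
      Real.sqrt 2 * ((6 : ℝ) ^ ((3 : ℝ) / 4) / (Real.sqrt Real.pi * (2 * p ^ 2 + 3))) := by
  constructor
  · have hspi : (0:ℝ) < Real.sqrt Real.pi := Real.sqrt_pos.mpr Real.pi_pos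
    have hcont : Continuous
        (fun p : ℝ => (6 : ℝ) ^ ((3 : ℝ) / 4) / (Real.sqrt Real.pi * (2 * p ^ 2 + 3))) := by
      apply continuous_const.div
      · continuity
      · intro p
        have h2 : (0:ℝ) < 2*p^2+3 := by positivity
        positivity
    rw [memLp_two_iff_integrable_sq hcont.aestronglyMeasurable]
    have hpi3 : (3:ℝ) < Real.pi := Real.pi_gt_three
    have hspi2 : Real.sqrt Real.pi ^ 2 = Real.pi := Real.sq_sqrt Real.pi_pos.le
    have hc : (0:ℝ) < (6 : ℝ) ^ ((3 : ℝ) / 4) := by positivity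
    apply (integrable_inv_one_add_sq.const_mul (((6 : ℝ) ^ ((3 : ℝ) / 4))^2)).mono
      (hcont.pow 2).aestronglyMeasurable
    apply ae_of_all
    intro p
    have h1 : (0:ℝ) < 1 + p^2 := by positivity
    have h2 : (0:ℝ) < 2*p^2+3 := by positivity
    have key : ((6 : ℝ) ^ ((3 : ℝ) / 4) / (Real.sqrt Real.pi * (2 * p ^ 2 + 3)))^2 ≤
        ((6 : ℝ) ^ ((3 : ℝ) / 4))^2 * (1+p^2)⁻¹ := by
      rw [div_pow, mul_pow, hspi2, div_le_iff₀ (by positivity)]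
      have h5 : (1:ℝ) + p^2 ≤ Real.pi * (2*p^2+3)^2 := by
        nlinarith [sq_nonneg p, sq_nonneg (p^2)]
      calc ((6 : ℝ) ^ ((3 : ℝ) / 4))^2
          = ((6 : ℝ) ^ ((3 : ℝ) / 4))^2 * (1+p^2)⁻¹ * (1+p^2) := by field_simp
        _ ≤ ((6 : ℝ) ^ ((3 : ℝ) / 4))^2 * (1+p^2)⁻¹ * (Real.pi * (2*p^2+3)^2) := by
            apply mul_le_mul_of_nonneg_left h5 (by positivity)
    calc ‖((6 : ℝ) ^ ((3 : ℝ) / 4) / (Real.sqrt Real.pi * (2 * p ^ 2 + 3)))^2‖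
        = ((6 : ℝ) ^ ((3 : ℝ) / 4) / (Real.sqrt Real.pi * (2 * p ^ 2 + 3)))^2 := by
          rw [Real.norm_eq_abs, abs_of_nonneg (sq_nonneg _)]
      _ ≤ ((6 : ℝ) ^ ((3 : ℝ) / 4))^2 * (1+p^2)⁻¹ := key
      _ = ‖((6 : ℝ) ^ ((3 : ℝ) / 4))^2 * (1+p^2)⁻¹‖ := by
          rw [Real.norm_eq_abs, abs_of_nonneg (by positivity)]
  · have h0 : ∀ᵐ p : ℝ, p ≠ (0:ℝ) := by
      have hm : (volume : Measure ℝ) {(0:ℝ)} = 0 := measure_singleton 0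
      have h := compl_mem_ae_iff.mpr hm
      exact Filter.eventually_of_mem h fun x hx => by simpa using hx
    filter_upwards [h0] with p hp
    exact aux_eigen_eq p hp
end
end
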